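/- If a ∈ [0,1], a ≠ 1/2, the 2-periodic points of V_4 (points x with V_4(V_4(x)) = x and V_4(x) ≠ x) on S² are exactly e₂ = (0,1,0) and e₃ = (0,0,1). -/

import Mathlib

def V4 (a : ℝ) (p : ℝ × ℝ × ℝ) : ℝ × ℝ × ℝ :=
  (p.1^2 + 2*a*p.1*(1-p.1), p.2.2^2 + 2*(1-a)*p.1*(1-p.1), p.2.1^2 + 2*p.2.1*p.2.2)

def S2 : Set (ℝ × ℝ × ℝ) :=
  {p | 0 ≤ p.1 ∧ 0 ≤ p.2.1 ∧ 0 ≤ p.2.2 ∧ p.1 + p.2.1 + p.2.2 = 1}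

private lemma V4_mono (a : ℝ) (ha0 : 0 ≤ a) (ha1 : a ≤ 1) :
    ∀ u v : ℝ, 0 ≤ u → u ≤ v → v ≤ 1 →
      u^2 + 2*a*u*(1-u) ≤ v^2 + 2*a*v*(1-v) := by
  intro u v hu huv hv
  nlinarith [mul_nonneg (sub_nonneg.2 huv) ha0,
    mul_nonneg (mul_nonneg (sub_nonneg.2 huv) ha0) (by linarith : (0:ℝ) ≤ u + v),
    mul_nonneg (sub_nonneg.2 huv) (by linarith : (0:ℝ) ≤ u + v),
    mul_nonneg (mul_nonneg (sub_nonneg.2 huv) (by linarith : (0:ℝ) ≤ 1 - a))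
      (by linarith : (0:ℝ) ≤ 2 - u - v)]

theorem V4_two_periodic (a : ℝ) (ha : a ∈ Set.Icc (0:ℝ) 1) (ha' : a ≠ 1/2) :
    {p ∈ S2 | V4 a (V4 a p) = p ∧ V4 a p ≠ p} =
      {((0:ℝ),(1:ℝ),(0:ℝ)), ((0:ℝ),(0:ℝ),(1:ℝ))} := by
  obtain ⟨ha0, ha1⟩ := ha
  ext ⟨x, y, z⟩
  simp only [Set.mem_setOf_eq, Set.mem_insert_iff, Set.mem_singleton_iff, S2, V4,
    Prod.mk.injEq, Prod.ext_iff, ne_eq, not_and]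
  constructor
  · rintro ⟨⟨hx, hy, hz, hsum⟩, ⟨h1, h2, h3⟩, hnf⟩
    have hx1 : x ≤ 1 := by linarith
    have hf0 : 0 ≤ x^2 + 2*a*x*(1-x) := by
      nlinarith [mul_nonneg (mul_nonneg ha0 hx) (by linarith : (0:ℝ) ≤ 1 - x)]
    have hf1 : x^2 + 2*a*x*(1-x) ≤ 1 := by
      nlinarith [sq_nonneg (1-x),
        mul_nonneg (mul_nonneg (by linarith : (0:ℝ) ≤ 1-a) hx)
          (by linarith : (0:ℝ) ≤ 1 - x)]
    -- the first coordinate is a fixed point of the monotone map u ↦ u² + 2au(1-u)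
    have hfx : x^2 + 2*a*x*(1-x) = x := by
      rcases le_or_gt (x^2 + 2*a*x*(1-x)) x with h | h
      · have h' := V4_mono a ha0 ha1 _ x hf0 h hx1
        rw [h1] at h'
        linarith
      · have h' := V4_mono a ha0 ha1 x _ hx h.le hf1
        rw [h1] at h'
        linarith
    have h2a : (1:ℝ) - 2*a ≠ 0 := fun h => ha' (by linarith)
    have hx01 : x = 0 ∨ x = 1 := by
      have hfac : (1 - 2*a) * (x * (x - 1)) = 0 := by linear_combination hfx
      rcases mul_eq_zero.1 hfac with h | h
      · exact absurd h h2a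
      · rcases mul_eq_zero.1 h with h | h
        · exact Or.inl h
        · exact Or.inr (by linarith)
    rcases hx01 with rfl | rfl
    · -- x = 0 : dynamics on the face reduce to z ↦ 1 - z²
      have hyz : y = 1 - z := by linarith
      subst hyz
      have key : z * (z - 1) * (z^2 + z - 1) = 0 := by linear_combination h2
      rcases mul_eq_zero.1 key with h | h
      · rcases mul_eq_zero.1 h with h | h
        · subst h; left; norm_num
        · right
          have hz1 : z = 1 := by linarith
          subst hz1; norm_num
      · -- z² + z - 1 = 0 : this is a fixed point of V4, contradiction
        exfalso
        exact hnf (by ring) (by linear_combination h) (by linear_combination -h)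
    · -- x = 1 : then y = z = 0 and (1,0,0) is a fixed point, contradiction
      exfalso
      have hy0 : y = 0 := by linarith
      have hz0 : z = 0 := by linarith
      subst hy0; subst hz0
      exact hnf (by ring) (by ring) (by ring)
  · rintro (⟨rfl, rfl, rfl⟩ | ⟨rfl, rfl, rfl⟩) <;>
      refine ⟨⟨by norm_num, by norm_num, by norm_num, by norm_num⟩,
        ⟨by ring, by ring, by ring⟩, ?_⟩ <;> intro h1 h2 <;> norm_num at h2
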